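/- arXiv:2502.18167 — 4 statements merged into one kernel-verified Lean document; each statement's English description precedes it below -/
import Mathlib

section
/- For all real x ≥ 0, (1 + x) * log(1 + x) - x ≥ x^2 / (2 + (2/3) * x). -/
open Real Set

private lemma log_pade_deriv (y : ℝ) (hy : -1 < y) :
    HasDerivAt (fun z : ℝ => Real.log (1 + z) - 3 * z * (z + 6) / (2 * (z + 3) ^ 2))
      (1 / (1 + y) - 27 / (y + 3) ^ 3) y := by
  have h1 : (0:ℝ) < 1 + y := by linarith
  have h3 : (y + 3) ≠ 0 := by nlinarith
  have hlog : HasDerivAt (fun z : ℝ => Real.log (1 + z)) (1 / (1 + y)) y := by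
    have h := ((hasDerivAt_id y).const_add 1).log (ne_of_gt h1)
    simpa using h
  have hnum : HasDerivAt (fun z : ℝ => 3 * z * (z + 6)) (3 * (y + 6) + 3 * y) y := by
    have h1' : HasDerivAt (fun z : ℝ => 3 * z) 3 y := by
      simpa using (hasDerivAt_id y).const_mul 3
    have h2' : HasDerivAt (fun z : ℝ => z + 6) 1 y := by
      simpa using (hasDerivAt_id y).add_const 6
    have := h1'.mul h2'
    exact this.congr_deriv (by ring)
  have hden : HasDerivAt (fun z : ℝ => 2 * (z + 3) ^ 2) (2 * (2 * (y + 3))) y := by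
    have h2' : HasDerivAt (fun z : ℝ => z + 3) 1 y := by
      simpa using (hasDerivAt_id y).add_const 3
    have := (h2'.pow 2).const_mul 2
    exact this.congr_deriv (by ring)
  have hden_ne : 2 * (y + 3) ^ 2 ≠ 0 := by positivity
  have hrat := hnum.div hden hden_ne
  have hrat' : HasDerivAt (fun z : ℝ => 3 * z * (z + 6) / (2 * (z + 3) ^ 2))
      (27 / (y + 3) ^ 3) y := by
    refine hrat.congr_deriv ?_
    field_simp
    ring
  exact hlog.sub hrat'

private lemma log_ge_pade (x : ℝ) (hx : 0 ≤ x) :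
    3 * x * (x + 6) / (2 * (x + 3) ^ 2) ≤ Real.log (1 + x) := by
  set g : ℝ → ℝ := fun z => Real.log (1 + z) - 3 * z * (z + 6) / (2 * (z + 3) ^ 2) with hg
  have hmono : MonotoneOn g (Ici 0) := by
    apply monotoneOn_of_deriv_nonneg (convex_Ici 0)
    · intro y hy
      exact ((log_pade_deriv y (by simp at hy; linarith)).differentiableAt).continuousAt.continuousWithinAt
    · intro y hy
      rw [interior_Ici] at hy
      exact ((log_pade_deriv y (by exact lt_trans (by norm_num) hy)).differentiableAt).differentiableWithinAt
    · intro y hy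
      rw [interior_Ici] at hy
      have hy' : (0:ℝ) < y := hy
      rw [(log_pade_deriv y (by linarith)).deriv]
      rw [sub_nonneg, div_le_div_iff₀ (by positivity) (by positivity)]
      nlinarith [sq_nonneg y, hy'.le]
  have h0 : g 0 = 0 := by simp [hg]
  have := hmono (self_mem_Ici) (mem_Ici.mpr hx) hx
  rw [h0] at this
  simpa [hg, sub_nonneg] using this

theorem phi_ge_bernstein (x : ℝ) (hx : 0 ≤ x) :
    (1 + x) * Real.log (1 + x) - x ≥ x ^ 2 / (2 + (2 / 3) * x) := by
  set f : ℝ → ℝ := fun z => (1 + z) * Real.log (1 + z) - z - z ^ 2 / (2 + (2 / 3) * z) with hf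
  have hderiv : ∀ y : ℝ, -1 < y →
      HasDerivAt f (Real.log (1 + y) - 3 * y * (y + 6) / (2 * (y + 3) ^ 2)) y := by
    intro y hy
    have h1 : (0:ℝ) < 1 + y := by linarith
    have hden : (2 + (2/3) * y) ≠ 0 := by nlinarith
    have hlog : HasDerivAt (fun z : ℝ => Real.log (1 + z)) (1 / (1 + y)) y := by
      have h := ((hasDerivAt_id y).const_add 1).log (ne_of_gt h1)
      simpa using h
    have h1p : HasDerivAt (fun z : ℝ => 1 + z) 1 y := by
      simpa using (hasDerivAt_id y).const_add 1
    have hA : HasDerivAt (fun z : ℝ => (1 + z) * Real.log (1 + z))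
        (1 * Real.log (1 + y) + (1 + y) * (1 / (1 + y))) y := h1p.mul hlog
    have hnum : HasDerivAt (fun z : ℝ => z ^ 2) (2 * y) y := by
      simpa using hasDerivAt_pow 2 y
    have hden' : HasDerivAt (fun z : ℝ => 2 + (2/3) * z) (2/3) y := by
      simpa using ((hasDerivAt_id y).const_mul (2/3 : ℝ)).const_add 2
    have hB := hnum.div hden' hden
    have hC := (hA.sub (hasDerivAt_id y)).sub hB
    have hdpos : (0:ℝ) < 2 + (2/3) * y := by linarith
    have e1 : (1 + y) * (1 / (1 + y)) = 1 := by field_simp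
    have e2 : (2 * y * (2 + 2/3 * y) - y ^ 2 * (2/3)) / (2 + 2/3 * y) ^ 2
        = 3 * y * (y + 6) / (2 * (y + 3) ^ 2) := by
      rw [div_eq_div_iff (by nlinarith) (by nlinarith)]
      ring
    refine hC.congr_deriv ?_
    rw [e1, e2]
    ring
  have hmono : MonotoneOn f (Ici 0) := by
    apply monotoneOn_of_deriv_nonneg (convex_Ici 0)
    · intro y hy
      exact ((hderiv y (by simp at hy; linarith)).differentiableAt).continuousAt.continuousWithinAt
    · intro y hy
      rw [interior_Ici] at hy
      exact ((hderiv y (lt_trans (by norm_num) hy)).differentiableAt).differentiableWithinAt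
    · intro y hy
      rw [interior_Ici] at hy
      have hy' : (0:ℝ) < y := hy
      rw [(hderiv y (by linarith)).deriv, sub_nonneg]
      exact log_ge_pade y hy'.le
  have h0 : f 0 = 0 := by simp [hf]
  have := hmono self_mem_Ici (mem_Ici.mpr hx) hx
  rw [h0] at this
  simp only [hf, sub_nonneg] at this
  linarith
end

section
/- Let Z be a real random variable with log E[exp(λ(Z - E[Z]))] ≤ v ψ(-λ c) for all λ > 0, with v, c > 0 and ψ(x) = e^{-x}+x-1. Then for every t > 0, P(Z ≥ E[Z] + √(2 c² v t) + (2 c t)/3) ≤ e^{-t}. -/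
open MeasureTheory

lemma bern_G (x : ℝ) : 0 ≤ 1 + (x - 1) * Real.exp x := by
  rcases le_total 1 x with h | h
  · nlinarith [Real.exp_pos x]
  · have h1 : -x + 1 ≤ Real.exp (-x) := Real.add_one_le_exp (-x)
    have h2 : Real.exp (-x) * Real.exp x = 1 := by
      rw [← Real.exp_add]; simp
    nlinarith [Real.exp_pos x, Real.exp_pos (-x)]

lemma bern_key (u : ℝ) (hu : 0 ≤ u) :
    (3 - u) * (Real.exp u - u - 1) ≤ 3 * u ^ 2 / 2 := by
  set F : ℝ → ℝ := fun x => 3 * x ^ 2 / 2 - (3 - x) * (Real.exp x - x - 1) with hF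
  set F1 : ℝ → ℝ := fun x =>
    3 * x + (Real.exp x - x - 1) - (3 - x) * (Real.exp x - 1) with hF1def
  have hdF : ∀ x : ℝ, HasDerivAt F (F1 x) x := by
    intro x
    have h1 : HasDerivAt (fun x : ℝ => 3 * x ^ 2 / 2) (3 * x) x := by
      have := ((hasDerivAt_pow 2 x).const_mul (3 : ℝ)).div_const 2
      exact this.congr_deriv (by norm_num; ring)
    have h2 : HasDerivAt (fun x : ℝ => (3 - x) * (Real.exp x - x - 1))
        ((-1) * (Real.exp x - x - 1) + (3 - x) * (Real.exp x - 1)) x := by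
      have ha : HasDerivAt (fun x : ℝ => 3 - x) (-1) x := (hasDerivAt_id x).const_sub 3
      have hb : HasDerivAt (fun x : ℝ => Real.exp x - x - 1) (Real.exp x - 1) x := by
        have := ((Real.hasDerivAt_exp x).sub (hasDerivAt_id x)).sub_const 1
        exact this
      exact ha.mul hb
    have := h1.sub h2
    refine this.congr_deriv ?_
    simp only [hF1def]; ring
  have hdF1 : ∀ x : ℝ, HasDerivAt F1 (1 + (x - 1) * Real.exp x) x := by
    intro x
    have h1 : HasDerivAt (fun x : ℝ => 3 * x) (3 : ℝ) x := by
      simpa using (hasDerivAt_id x).const_mul (3 : ℝ)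
    have hb : HasDerivAt (fun x : ℝ => Real.exp x - x - 1) (Real.exp x - 1) x := by
      have := ((Real.hasDerivAt_exp x).sub (hasDerivAt_id x)).sub_const 1
      exact this
    have h2 : HasDerivAt (fun x : ℝ => (3 - x) * (Real.exp x - 1))
        ((-1) * (Real.exp x - 1) + (3 - x) * Real.exp x) x := by
      have ha : HasDerivAt (fun x : ℝ => 3 - x) (-1) x := (hasDerivAt_id x).const_sub 3
      exact ha.mul ((Real.hasDerivAt_exp x).sub_const 1)
    have := (h1.add hb).sub h2
    refine this.congr_deriv ?_
    ring
  have hF1mono : Monotone F1 := by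
    apply monotone_of_deriv_nonneg
    · exact fun x => (hdF1 x).differentiableAt
    · intro x
      rw [(hdF1 x).deriv]
      exact bern_G x
  have hF10 : F1 0 = 0 := by simp [hF1def]
  have hF1nonneg : ∀ x : ℝ, 0 ≤ x → 0 ≤ F1 x := by
    intro x hx
    have := hF1mono hx
    rwa [hF10] at this
  have hFmono : MonotoneOn F (Set.Ici (0 : ℝ)) := by
    apply monotoneOn_of_deriv_nonneg (convex_Ici 0)
    · exact (Differentiable.continuous fun x => (hdF x).differentiableAt).continuousOn
    · exact fun x _ => (hdF x).differentiableAt.differentiableWithinAt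
    · intro x hx
      rw [(hdF x).deriv]
      exact hF1nonneg x (le_of_lt (by simpa using hx))
  have hF0 : F 0 = 0 := by simp [hF]
  have := hFmono (Set.self_mem_Ici) (Set.mem_Ici.2 hu) hu
  rw [hF0] at this
  simp only [hF] at this
  linarith

theorem bernstein_deviation {Ω : Type*} [MeasurableSpace Ω] (μ : Measure Ω)
    [IsProbabilityMeasure μ] (Z : Ω → ℝ) (hZ : Integrable Z μ)
    (v c : ℝ) (hv : 0 < v) (hc : 0 < c)
    (hmgf : ∀ l : ℝ, 0 < l →
      Integrable (fun ω => Real.exp (l * (Z ω - ∫ ω', Z ω' ∂μ))) μ ∧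
      Real.log (∫ ω, Real.exp (l * (Z ω - ∫ ω', Z ω' ∂μ)) ∂μ) ≤
        v * (Real.exp (l * c) - l * c - 1)) :
    ∀ t : ℝ, 0 < t →
      μ {ω | (∫ ω', Z ω' ∂μ) + Real.sqrt (2 * c ^ 2 * v * t) + 2 * c * t / 3 ≤ Z ω} ≤
        ENNReal.ofReal (Real.exp (-t)) := by
  intro t ht
  set m := ∫ ω', Z ω' ∂μ with hm
  set r := Real.sqrt (2 * t / v) with hrdef
  have hr : 0 < r := Real.sqrt_pos.2 (by positivity)
  have hr2 : v * r ^ 2 = 2 * t := by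
    rw [hrdef, Real.sq_sqrt (by positivity)]
    field_simp
  set u := 3 * r / (3 + r) with hudef
  have hu0 : 0 < u := by positivity
  have hu3 : u < 3 := by
    rw [hudef, div_lt_iff₀ (by linarith)]
    nlinarith
  have huu : u * (3 + r) = 3 * r := by
    rw [hudef]; field_simp
  set l := u / c with hldef
  have hl0 : 0 < l := by positivity
  have hlc : l * c = u := by
    rw [hldef]; field_simp
  obtain ⟨hint, hlog⟩ := hmgf l hl0
  -- the deviation value
  have hsqrt : Real.sqrt (2 * c ^ 2 * v * t) = c * v * r := by
    rw [show 2 * c ^ 2 * v * t = (c * v * r) ^ 2 by nlinarith]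
    exact Real.sqrt_sq (by positivity)
  set a := Real.sqrt (2 * c ^ 2 * v * t) + 2 * c * t / 3 with hadef
  have ha : a = c * v * r + 2 * c * t / 3 := by rw [hadef, hsqrt]
  -- key arithmetic inequality
  set E := Real.exp u - u - 1 with hE
  have hE0 : 0 ≤ E := by
    have := Real.add_one_le_exp u
    rw [hE]; linarith
  have hkey : (3 - u) * E ≤ 3 * u ^ 2 / 2 := bern_key u hu0.le
  have h3u2 : 3 * u ^ 2 = (3 - u) * u * r := by
    rw [hudef]
    field_simp
    ring
  have hEur : E ≤ u * r / 2 := by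
    have h3upos : 0 < 3 - u := by linarith
    rw [h3u2] at hkey
    have : (3 - u) * E ≤ (3 - u) * (u * r / 2) := by linarith [hkey]
    exact le_of_mul_le_mul_left (by linarith [this]) h3upos
  have harith : -l * a + v * (Real.exp (l * c) - l * c - 1) ≤ -t := by
    rw [hlc, ← hE, ha]
    have hla : l * (c * v * r + 2 * c * t / 3) = u * (v * r + 2 * t / 3) := by
      rw [hldef]; field_simp
    have h1 : v * E ≤ v * (u * r / 2) := by nlinarith
    have h2 : t ≤ u * (v * r + 2 * t / 3) - v * (u * r / 2) := by nlinarith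
    linarith [hla, h1, h2]
  -- Chernoff bound
  have hch := ProbabilityTheory.measure_ge_le_exp_mul_mgf (X := fun ω => Z ω - m)
    (μ := μ) (t := l) a hl0.le hint
  have hmgfpos : 0 < ProbabilityTheory.mgf (fun ω => Z ω - m) μ l :=
    ProbabilityTheory.mgf_pos' (IsProbabilityMeasure.ne_zero μ) hint
  have hmgfeq : ProbabilityTheory.mgf (fun ω => Z ω - m) μ l
      = ∫ ω, Real.exp (l * (Z ω - m)) ∂μ := rfl
  have hfinal : Real.exp (-l * a) * ProbabilityTheory.mgf (fun ω => Z ω - m) μ l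
      ≤ Real.exp (-t) := by
    rw [← Real.exp_log hmgfpos, ← Real.exp_add]
    apply Real.exp_le_exp.2
    have := hlog
    rw [← hmgfeq] at this
    linarith
  have hset : {ω | m + Real.sqrt (2 * c ^ 2 * v * t) + 2 * c * t / 3 ≤ Z ω}
      = {ω | a ≤ Z ω - m} := by
    ext ω
    simp only [Set.mem_setOf_eq, hadef]
    constructor <;> intro h <;> linarith
  rw [hset]
  have htoReal : (μ {ω | a ≤ Z ω - m}).toReal ≤ Real.exp (-t) := le_trans hch hfinal
  have hne : μ {ω | a ≤ Z ω - m} ≠ ⊤ := measure_ne_top μ _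
  rw [← ENNReal.ofReal_toReal hne]
  exact ENNReal.ofReal_le_ofReal htoReal
end

section
/- A nontrivial sub-root function Φ : [0,∞) → [0,∞) (nonnegative, nondecreasing, with r ↦ Φ(r)/√r nonincreasing on (0,∞), and not identically zero) is continuous on (0,∞) and the equation Φ(r) = r has a unique positive solution r*; moreover for every r > 0, r ≥ Φ(r) if and only if r ≥ r*. -/
open Real Set Filter

theorem subroot_fixed_point (Φ : ℝ → ℝ)
    (hnonneg : ∀ r : ℝ, 0 ≤ r → 0 ≤ Φ r)
    (hmono : MonotoneOn Φ (Set.Ici 0))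
    (hsub : AntitoneOn (fun r => Φ r / Real.sqrt r) (Set.Ioi 0))
    (hnontriv : ∃ r : ℝ, 0 ≤ r ∧ Φ r ≠ 0) :
    ContinuousOn Φ (Set.Ioi 0) ∧
    ∃ rstar : ℝ, 0 < rstar ∧ Φ rstar = rstar ∧
      (∀ r : ℝ, 0 < r → Φ r = r → r = rstar) ∧
      (∀ r : ℝ, 0 < r → (Φ r ≤ r ↔ rstar ≤ r)) := by
  obtain ⟨r0, hr0, hΦr0⟩ := hnontriv
  have hΦr0' : 0 < Φ r0 := lt_of_le_of_ne (hnonneg r0 hr0) (Ne.symm hΦr0)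
  set a : ℝ := r0 + 1 with ha_def
  have ha : 0 < a := by linarith
  have hΦa : 0 < Φ a :=
    lt_of_lt_of_le hΦr0' (hmono hr0 ha.le (by linarith))
  -- key cross-multiplied inequality
  have key : ∀ r s : ℝ, 0 < r → r ≤ s → Φ s * Real.sqrt r ≤ Φ r * Real.sqrt s := by
    intro r s hr hrs
    have hs : 0 < s := lt_of_lt_of_le hr hrs
    have h := hsub (Set.mem_Ioi.2 hr) (Set.mem_Ioi.2 hs) hrs
    simp only at h
    rw [div_le_div_iff₀ (Real.sqrt_pos.2 hs) (Real.sqrt_pos.2 hr)] at h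
    exact h
  -- continuity
  have hcont : ContinuousOn Φ (Set.Ioi 0) := by
    intro x hx
    have hx' : 0 < x := hx
    have hsx : 0 < Real.sqrt x := Real.sqrt_pos.2 hx'
    have hΦx : 0 ≤ Φ x := hnonneg x hx'.le
    set g : ℝ → ℝ := fun r => Φ x * min 1 (Real.sqrt r / Real.sqrt x) with hg_def
    set h : ℝ → ℝ := fun r => Φ x * max 1 (Real.sqrt r / Real.sqrt x) with hh_def
    have hgc : Continuous g :=
      continuous_const.mul (continuous_const.min (Real.continuous_sqrt.div_const _))
    have hhc : Continuous h :=
      continuous_const.mul (continuous_const.max (Real.continuous_sqrt.div_const _))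
    have hgx : g x = Φ x := by
      simp [hg_def, div_self hsx.ne']
    have hhx : h x = Φ x := by
      simp [hh_def, div_self hsx.ne']
    have hbounds : ∀ r ∈ Set.Ioi (0:ℝ), g r ≤ Φ r ∧ Φ r ≤ h r := by
      intro r hr
      have hrpos : 0 < r := hr
      have hsr : 0 < Real.sqrt r := Real.sqrt_pos.2 hrpos
      rcases le_total r x with hrx | hxr
      · constructor
        · have h1 : Φ x * Real.sqrt r ≤ Φ r * Real.sqrt x := key r x hrpos hrx
          have h2 : Φ x * (Real.sqrt r / Real.sqrt x) ≤ Φ r := by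
            rw [mul_div_assoc'] at *
            exact (div_le_iff₀ hsx).2 h1
          calc g r ≤ Φ x * (Real.sqrt r / Real.sqrt x) :=
                mul_le_mul_of_nonneg_left (min_le_right _ _) hΦx
            _ ≤ Φ r := h2
        · calc Φ r ≤ Φ x := hmono hrpos.le hx'.le hrx
            _ ≤ h r := le_mul_of_one_le_right hΦx (le_max_left _ _)
      · constructor
        · have h1 : Φ x * min 1 (Real.sqrt r / Real.sqrt x) ≤ Φ x * 1 :=
            mul_le_mul_of_nonneg_left (min_le_left _ _) hΦx
          calc g r ≤ Φ x * 1 := h1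
            _ = Φ x := mul_one _
            _ ≤ Φ r := hmono hx'.le hrpos.le hxr
        · have h1 : Φ r * Real.sqrt x ≤ Φ x * Real.sqrt r := key x r hx' hxr
          have h2 : Φ r ≤ Φ x * (Real.sqrt r / Real.sqrt x) := by
            rw [mul_div_assoc']
            exact (le_div_iff₀ hsx).2 h1
          calc Φ r ≤ Φ x * (Real.sqrt r / Real.sqrt x) := h2
            _ ≤ h r := mul_le_mul_of_nonneg_left (le_max_right _ _) hΦx
    have hgt : Filter.Tendsto g (nhdsWithin x (Set.Ioi 0)) (nhds (Φ x)) := by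
      have h1 : Filter.Tendsto g (nhdsWithin x (Set.Ioi 0)) (nhds (g x)) :=
        (hgc.tendsto x).mono_left nhdsWithin_le_nhds
      rwa [hgx] at h1
    have hht : Filter.Tendsto h (nhdsWithin x (Set.Ioi 0)) (nhds (Φ x)) := by
      have h1 : Filter.Tendsto h (nhdsWithin x (Set.Ioi 0)) (nhds (h x)) :=
        (hhc.tendsto x).mono_left nhdsWithin_le_nhds
      rwa [hhx] at h1
    exact tendsto_of_tendsto_of_tendsto_of_le_of_le' hgt hht
      (eventually_mem_nhdsWithin.mono fun r hr => (hbounds r hr).1)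
      (eventually_mem_nhdsWithin.mono fun r hr => (hbounds r hr).2)
  refine ⟨hcont, ?_⟩
  -- find small point with Φ r1 > r1 and big point with Φ r2 < r2
  set c : ℝ := Φ a / Real.sqrt a with hc_def
  have hsa : 0 < Real.sqrt a := Real.sqrt_pos.2 ha
  have hc : 0 < c := div_pos hΦa hsa
  set r1 : ℝ := min a (c ^ 2 / 2) with hr1_def
  have hr1pos : 0 < r1 := lt_min ha (by positivity)
  have hr1a : r1 ≤ a := min_le_left _ _
  have hr1c : Real.sqrt r1 < c := by
    have h1 : r1 < c ^ 2 := lt_of_le_of_lt (min_le_right _ _) (by nlinarith)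
    have := Real.sqrt_lt_sqrt hr1pos.le h1
    rwa [Real.sqrt_sq hc.le] at this
  have hΦr1 : r1 < Φ r1 := by
    have h1 : Φ a * Real.sqrt r1 ≤ Φ r1 * Real.sqrt a := key r1 a hr1pos hr1a
    have hsr1 : 0 < Real.sqrt r1 := Real.sqrt_pos.2 hr1pos
    have h2 : c * Real.sqrt r1 ≤ Φ r1 := by
      rw [hc_def, div_mul_eq_mul_div, div_le_iff₀ hsa]
      linarith
    have h3 : Real.sqrt r1 * Real.sqrt r1 = r1 := Real.mul_self_sqrt hr1pos.le
    nlinarith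
  set r2 : ℝ := max a (c ^ 2) + 1 with hr2_def
  have hr2a : a ≤ r2 := le_trans (le_max_left _ _) (by linarith)
  have hr2pos : 0 < r2 := lt_of_lt_of_le ha hr2a
  have hr2c : c < Real.sqrt r2 := by
    have h1 : c ^ 2 < r2 := lt_of_le_of_lt (le_max_right a (c ^ 2)) (by linarith)
    have := Real.sqrt_lt_sqrt (by positivity) h1
    rwa [Real.sqrt_sq hc.le] at this
  have hΦr2 : Φ r2 < r2 := by
    have h1 : Φ r2 * Real.sqrt a ≤ Φ a * Real.sqrt r2 := key a r2 ha hr2a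
    have hsr2 : 0 < Real.sqrt r2 := Real.sqrt_pos.2 hr2pos
    have h2 : Φ r2 ≤ c * Real.sqrt r2 := by
      rw [hc_def, div_mul_eq_mul_div, le_div_iff₀ hsa]
      linarith
    have h3 : Real.sqrt r2 * Real.sqrt r2 = r2 := Real.mul_self_sqrt hr2pos.le
    nlinarith
  -- IVT
  have hr12 : r1 ≤ r2 := le_trans hr1a hr2a
  have hIcc : Set.Icc r1 r2 ⊆ Set.Ioi 0 := fun t ht => lt_of_lt_of_le hr1pos ht.1
  have hfc : ContinuousOn (fun r => Φ r - r) (Set.Icc r1 r2) :=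
    (hcont.mono hIcc).sub continuousOn_id
  have h0mem : (0 : ℝ) ∈ Set.Icc (Φ r2 - r2) (Φ r1 - r1) := ⟨by linarith, by linarith⟩
  obtain ⟨rstar, hrstarmem, hrstareq⟩ :=
    intermediate_value_Icc' hr12 hfc h0mem
  have hrstarpos : 0 < rstar := lt_of_lt_of_le hr1pos hrstarmem.1
  have hrstar : Φ rstar = rstar := by
    have : Φ rstar - rstar = 0 := hrstareq
    linarith
  have hsrstar : 0 < Real.sqrt rstar := Real.sqrt_pos.2 hrstarpos
  have hsqstar : Real.sqrt rstar * Real.sqrt rstar = rstar := Real.mul_self_sqrt hrstarpos.le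
  -- strict comparison claims
  have claimA : ∀ r : ℝ, rstar < r → Φ r < r := by
    intro r hrr
    have hrpos : 0 < r := lt_trans hrstarpos hrr
    have hsr : 0 < Real.sqrt r := Real.sqrt_pos.2 hrpos
    have hsq : Real.sqrt r * Real.sqrt r = r := Real.mul_self_sqrt hrpos.le
    have h1 : Φ r * Real.sqrt rstar ≤ Φ rstar * Real.sqrt r := key rstar r hrstarpos hrr.le
    rw [hrstar] at h1
    have h2 : Real.sqrt rstar < Real.sqrt r := Real.sqrt_lt_sqrt hrstarpos.le hrr
    have h3 : Φ r * Real.sqrt rstar ≤ (Real.sqrt rstar * Real.sqrt r) * Real.sqrt rstar := by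
      calc Φ r * Real.sqrt rstar ≤ rstar * Real.sqrt r := h1
        _ = (Real.sqrt rstar * Real.sqrt r) * Real.sqrt rstar := by
            linear_combination Real.sqrt r * hsqstar.symm
    have h4 : Φ r ≤ Real.sqrt rstar * Real.sqrt r := le_of_mul_le_mul_right h3 hsrstar
    calc Φ r ≤ Real.sqrt rstar * Real.sqrt r := h4
      _ < Real.sqrt r * Real.sqrt r := mul_lt_mul_of_pos_right h2 hsr
      _ = r := hsq
  have claimB : ∀ r : ℝ, 0 < r → r < rstar → r < Φ r := by
    intro r hrpos hrr
    have hsr : 0 < Real.sqrt r := Real.sqrt_pos.2 hrpos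
    have hsq : Real.sqrt r * Real.sqrt r = r := Real.mul_self_sqrt hrpos.le
    have h1 : Φ rstar * Real.sqrt r ≤ Φ r * Real.sqrt rstar := key r rstar hrpos hrr.le
    rw [hrstar] at h1
    have h2 : Real.sqrt r < Real.sqrt rstar := Real.sqrt_lt_sqrt hrpos.le hrr
    have h3 : (Real.sqrt r * Real.sqrt rstar) * Real.sqrt rstar ≤ Φ r * Real.sqrt rstar := by
      calc (Real.sqrt r * Real.sqrt rstar) * Real.sqrt rstar = rstar * Real.sqrt r := by
            linear_combination Real.sqrt r * hsqstar
        _ ≤ Φ r * Real.sqrt rstar := h1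
    have h4 : Real.sqrt r * Real.sqrt rstar ≤ Φ r := le_of_mul_le_mul_right h3 hsrstar
    calc r = Real.sqrt r * Real.sqrt r := hsq.symm
      _ < Real.sqrt r * Real.sqrt rstar := mul_lt_mul_of_pos_left h2 hsr
      _ ≤ Φ r := h4
  refine ⟨rstar, hrstarpos, hrstar, ?_, ?_⟩
  · intro r hrpos hre
    rcases lt_trichotomy r rstar with h | h | h
    · exact absurd hre (by have := claimB r hrpos h; linarith)
    · exact h
    · exact absurd hre (by have := claimA r h; linarith)
  · intro r hrpos
    constructor
    · intro hle
      by_contra hlt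
      push_neg at hlt
      have := claimB r hrpos hlt
      linarith
    · intro hge
      rcases eq_or_lt_of_le hge with h | h
      · rw [← h, hrstar]
      · exact (claimA r h).le
end

section
/- Let v, v_kj, W > 0 with the following setup: if v_kj^{1/2} W^{1/2} v^{-1/2} ≤ 1 then v ≥ v_kj W and for any λ, U > 0, v_kj ψ(-λU) ≤ (v/W) ψ(-λU); if v_kj^{1/2} W^{1/2} v^{-1/2} > 1 then v < v_kj W and v_kj ψ(-λ U √v / (√v_kj √W)) ≤ (v/W) ψ(-λU), where ψ(x) = e^{-x} + x - 1. Concretely: for positive reals a, c, λ, U with a ≤ c, a · ψ(-λU) ≤ c · ψ(-λU); and for positive reals a, c, λ, U with a > c, a · ψ(-λU √(c/a)) ≤ c · ψ(-λU). -/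
lemma psi_key (t s : ℝ) (ht0 : 0 ≤ t) (ht1 : t ≤ 1) (hs : 0 ≤ s) :
    Real.exp (t * s) - t * s - 1 ≤ t ^ 2 * (Real.exp s - s - 1) := by
  set G : ℝ → ℝ := fun x => t ^ 2 * Real.exp x - t * Real.exp (t * x) - (t ^ 2 - t) with hGdef
  set F : ℝ → ℝ := fun x =>
    t ^ 2 * (Real.exp x - x - 1) - (Real.exp (t * x) - t * x - 1) with hFdef
  have hexp : ∀ x : ℝ, HasDerivAt (fun y => Real.exp (t * y)) (Real.exp (t * x) * t) x := by
    intro x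
    have h := (Real.hasDerivAt_exp (t * x)).comp x (((hasDerivAt_id x).const_mul t) : HasDerivAt (fun y => t * y) (t * 1) x)
    rw [mul_one] at h
    exact h
  have hG : ∀ x : ℝ, HasDerivAt G (t ^ 2 * Real.exp x - t * (Real.exp (t * x) * t)) x := by
    intro x
    exact (((Real.hasDerivAt_exp x).const_mul (t ^ 2)).sub ((hexp x).const_mul t)).sub_const _
  have hF : ∀ x : ℝ, HasDerivAt F (G x) x := by
    intro x
    have h1 : HasDerivAt (fun y => t ^ 2 * (Real.exp y - y - 1))
        (t ^ 2 * (Real.exp x - 1)) x := by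
      exact (((Real.hasDerivAt_exp x).sub (hasDerivAt_id x)).sub_const 1).const_mul _
    have h2 : HasDerivAt (fun y => Real.exp (t * y) - t * y - 1)
        (Real.exp (t * x) * t - t) x := by
      simpa using (((hexp x).sub ((hasDerivAt_id x).const_mul t)).sub_const 1)
    have := h1.sub h2
    refine HasDerivAt.congr_deriv this ?_
    simp only [hGdef]
    ring
  have hGnonneg : ∀ x : ℝ, 0 ≤ x → 0 ≤ G x := by
    have hmono : MonotoneOn G (Set.Ici (0 : ℝ)) := by
      apply monotoneOn_of_deriv_nonneg (convex_Ici 0)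
      · exact (Continuous.continuousOn (by fun_prop))
      · intro x _
        exact (hG x).differentiableAt.differentiableWithinAt
      · intro x hx
        rw [interior_Ici] at hx
        rw [(hG x).deriv]
        have htx : t * x ≤ x := by nlinarith [le_of_lt (Set.mem_Ioi.mp hx)]
        have := Real.exp_le_exp.mpr htx
        nlinarith [sq_nonneg t, Real.exp_pos (t * x)]
    intro x hx
    have h0 : G 0 = 0 := by simp [hGdef]
    have := hmono (Set.self_mem_Ici) (Set.mem_Ici.mpr hx) hx
    linarith [h0 ▸ this]
  have hFnonneg : 0 ≤ F s := by
    have hmono : MonotoneOn F (Set.Ici (0 : ℝ)) := by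
      apply monotoneOn_of_deriv_nonneg (convex_Ici 0)
      · exact (Continuous.continuousOn (by fun_prop))
      · intro x _
        exact (hF x).differentiableAt.differentiableWithinAt
      · intro x hx
        rw [interior_Ici] at hx
        rw [(hF x).deriv]
        exact hGnonneg x hx.le
    have h0 : F 0 = 0 := by simp [hFdef]
    have := hmono (Set.self_mem_Ici) (Set.mem_Ici.mpr hs) hs
    linarith [h0 ▸ this]
  simp only [hFdef] at hFnonneg
  linarith

theorem psi_monotone_and_homogeneity (a c l U : ℝ)
    (ha : 0 < a) (hc : 0 < c) (hl : 0 < l) (hU : 0 < U) :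
    (a ≤ c → a * (Real.exp (-(-(l * U))) + (-(l * U)) - 1) ≤
      c * (Real.exp (-(-(l * U))) + (-(l * U)) - 1)) ∧
    (c < a → a * (Real.exp (-(-(l * U * Real.sqrt (c / a)))) +
        (-(l * U * Real.sqrt (c / a))) - 1) ≤
      c * (Real.exp (-(-(l * U))) + (-(l * U)) - 1)) := by
  have hs : 0 < l * U := mul_pos hl hU
  have hpsi : 0 ≤ Real.exp (l * U) - l * U - 1 := by
    linarith [Real.add_one_le_exp (l * U)]
  constructor
  · intro hac
    simp only [neg_neg]
    have := mul_le_mul_of_nonneg_right hac hpsi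
    linarith
  · intro hca
    simp only [neg_neg]
    set t := Real.sqrt (c / a) with htdef
    have ht0 : 0 ≤ t := Real.sqrt_nonneg _
    have hca1 : c / a ≤ 1 := (div_le_one ha).mpr hca.le
    have ht1 : t ≤ 1 := Real.sqrt_le_one.mpr hca1
    have ht2 : t ^ 2 = c / a := Real.sq_sqrt (by positivity)
    have key := psi_key t (l * U) ht0 ht1 hs.le
    have hts : t * (l * U) = l * U * t := by ring
    rw [hts, ht2] at key
    have := mul_le_mul_of_nonneg_left key ha.le
    have hac : a * (c / a * (Real.exp (l * U) - l * U - 1))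
        = c * (Real.exp (l * U) - l * U - 1) := by
      field_simp
    rw [hac] at this
    linarith
end
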